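/- For integers r ≥ 4, 1 ≤ k ≤ r−3, and r ≤ n ≤ 2r−3−k, the coefficient c̃_g(r,k,n) := C(r, k+1)·((2r−k)(k+1) − (n+1)(k+2))/(k+2) + C(k+(n−r)+1, k+1)·((2r−k)(k+1) − (n+1)k)/(k+2) is strictly positive. -/

import Mathlib

private lemma cstepc (k a : ℕ) :
    ((k+a+1).choose (k+1) : ℚ) * a = ((k:ℚ)+a+1) * ((k+a).choose (k+1) : ℚ) := by
  have h1 := Nat.add_one_mul_choose_eq (k+a) k
  have h2 := Nat.choose_succ_right_eq (k+a) k
  have h3 : k + a - k = a := by omega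
  rw [h3] at h2
  have q1 : ((k:ℚ)+a+1) * ((k+a).choose k : ℚ) = ((k+a+1).choose (k+1) : ℚ) * ((k:ℚ)+1) := by
    exact_mod_cast h1
  have q2 : ((k+a).choose (k+1) : ℚ) * ((k:ℚ)+1) = ((k+a).choose k : ℚ) * (a:ℚ) := by
    exact_mod_cast h2
  have hpos : ((k:ℚ)+1) ≠ 0 := by positivity
  apply mul_right_cancel₀ hpos
  linear_combination (-(a:ℚ)) * q1 - ((k:ℚ)+a+1) * q2

private lemma star_aux (k u : ℕ) :
    ∀ d m : ℕ, m + 1 + d = u →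
    ((k+m+1).choose (k+1) : ℚ) *
        (((k:ℚ)+1) * (((k:ℚ)+2*u+6)*((k:ℚ)+1) - ((k:ℚ)+u+m+5)*(k:ℚ)) - (k:ℚ)*((m:ℚ)+1))
      ≤ ((k:ℚ)+2) * ((m:ℚ)+1) * ((k+u+3).choose (k+1) : ℚ) := by
  intro d
  induction d with
  | zero =>
    intro m hm
    obtain rfl : u = m + 1 := by omega
    have c1 := cstepc k (m+3)
    have c2 := cstepc k (m+2)
    have c3 := cstepc k (m+1)
    rw [show k+(m+3)+1 = k+m+4 from by omega, show k+(m+3) = k+m+3 from by omega] at c1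
    rw [show k+(m+2)+1 = k+m+3 from by omega, show k+(m+2) = k+m+2 from by omega] at c2
    rw [show k+(m+1)+1 = k+m+2 from by omega, show k+(m+1) = k+m+1 from by omega] at c3
    push_cast at c1 c2 c3
    rw [show k+(m+1)+3 = k+m+4 from by omega]
    push_cast
    set A : ℚ := ((k+m+4).choose (k+1) : ℚ) with hA
    set B : ℚ := ((k+m+1).choose (k+1) : ℚ) with hB
    have E : A * (((m:ℚ)+3)*((m:ℚ)+2)*((m:ℚ)+1))
        = ((k:ℚ)+m+4)*((k:ℚ)+m+3)*((k:ℚ)+m+2) * B := by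
      linear_combination (((m:ℚ)+2)*((m:ℚ)+1)) * c1 + (((k:ℚ)+m+4)*((m:ℚ)+1)) * c2
        + (((k:ℚ)+m+4)*((k:ℚ)+m+3)) * c3
    have hk0 : (0:ℚ) ≤ (k:ℚ) := by positivity
    have hm0 : (0:ℚ) ≤ (m:ℚ) := by positivity
    have hQ : (((k:ℚ)+1) * (((k:ℚ)+2*((m:ℚ)+1)+6)*((k:ℚ)+1) - ((k:ℚ)+((m:ℚ)+1)+m+5)*(k:ℚ))
          - (k:ℚ)*((m:ℚ)+1)) * (((m:ℚ)+3)*((m:ℚ)+2))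
        ≤ ((k:ℚ)+2) * (((k:ℚ)+m+4)*((k:ℚ)+m+3)*((k:ℚ)+m+2)) := by
      nlinarith [mul_nonneg hk0 hm0, mul_nonneg (mul_nonneg hk0 hk0) hm0,
        mul_nonneg hk0 hk0, mul_nonneg (mul_nonneg hk0 hk0) hk0, mul_nonneg hm0 hm0,
        mul_nonneg (mul_nonneg hk0 hm0) hm0,
        mul_nonneg (mul_nonneg (mul_nonneg hk0 hk0) hk0) hm0]
    have hBnn : (0:ℚ) ≤ B := by rw [hB]; positivity
    have hfin : B * (((k:ℚ)+1) * (((k:ℚ)+2*((m:ℚ)+1)+6)*((k:ℚ)+1)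
            - ((k:ℚ)+((m:ℚ)+1)+m+5)*(k:ℚ)) - (k:ℚ)*((m:ℚ)+1))
            * (((m:ℚ)+3)*((m:ℚ)+2)*((m:ℚ)+1))
        ≤ (((k:ℚ)+2) * ((m:ℚ)+1) * A) * (((m:ℚ)+3)*((m:ℚ)+2)*((m:ℚ)+1)) := by
      calc B * (((k:ℚ)+1) * (((k:ℚ)+2*((m:ℚ)+1)+6)*((k:ℚ)+1)
              - ((k:ℚ)+((m:ℚ)+1)+m+5)*(k:ℚ)) - (k:ℚ)*((m:ℚ)+1))
              * (((m:ℚ)+3)*((m:ℚ)+2)*((m:ℚ)+1))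
          = (B*((m:ℚ)+1)) * ((((k:ℚ)+1) * (((k:ℚ)+2*((m:ℚ)+1)+6)*((k:ℚ)+1)
              - ((k:ℚ)+((m:ℚ)+1)+m+5)*(k:ℚ)) - (k:ℚ)*((m:ℚ)+1)) * (((m:ℚ)+3)*((m:ℚ)+2))) := by
            ring
        _ ≤ (B*((m:ℚ)+1)) * (((k:ℚ)+2) * (((k:ℚ)+m+4)*((k:ℚ)+m+3)*((k:ℚ)+m+2))) := by
            apply mul_le_mul_of_nonneg_left hQ (by positivity)
        _ = (((k:ℚ)+2) * ((m:ℚ)+1) * A) * (((m:ℚ)+3)*((m:ℚ)+2)*((m:ℚ)+1)) := by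
            linear_combination (-((k:ℚ)+2) * ((m:ℚ)+1)) * E
    have hlast := le_of_mul_le_mul_right hfin
      (by positivity : (0:ℚ) < ((m:ℚ)+3)*((m:ℚ)+2)*((m:ℚ)+1))
    linarith [hlast]
  | succ d ih =>
    intro m hm
    have IH := ih (m+1) (by omega)
    rw [show k+(m+1)+1 = k+m+2 from by omega] at IH
    push_cast at IH
    have hI := cstepc k (m+1)
    rw [show k+(m+1)+1 = k+m+2 from by omega, show k+(m+1) = k+m+1 from by omega] at hI
    push_cast at hI
    have hmono : ((k+m+2).choose (k+1) : ℚ) ≤ ((k+u+3).choose (k+1) : ℚ) := by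
      exact_mod_cast Nat.choose_le_choose (k+1) (by omega : k+m+2 ≤ k+u+3)
    set A : ℚ := ((k+u+3).choose (k+1) : ℚ) with hA
    set B1 : ℚ := ((k+m+1).choose (k+1) : ℚ) with hB1
    set B2 : ℚ := ((k+m+2).choose (k+1) : ℚ) with hB2
    have e1 : B1 * (((k:ℚ)+1) * (((k:ℚ)+2*u+6)*((k:ℚ)+1) - ((k:ℚ)+u+m+5)*(k:ℚ))
            - (k:ℚ)*((m:ℚ)+1)) * ((k:ℚ)+m+2)
        = ((m:ℚ)+1) * (B2 * (((k:ℚ)+1) * (((k:ℚ)+2*u+6)*((k:ℚ)+1)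
              - ((k:ℚ)+u+((m:ℚ)+1)+5)*(k:ℚ)) - (k:ℚ)*((m:ℚ)+1+1)))
          + ((m:ℚ)+1) * ((k:ℚ)*((k:ℚ)+2)) * B2 := by
      linear_combination (-(((k:ℚ)+1) * (((k:ℚ)+2*u+6)*((k:ℚ)+1) - ((k:ℚ)+u+m+5)*(k:ℚ))
        - (k:ℚ)*((m:ℚ)+1))) * hI
    have h3 : ((m:ℚ)+1) * (B2 * (((k:ℚ)+1) * (((k:ℚ)+2*u+6)*((k:ℚ)+1)
              - ((k:ℚ)+u+((m:ℚ)+1)+5)*(k:ℚ)) - (k:ℚ)*((m:ℚ)+1+1)))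
        ≤ ((m:ℚ)+1) * (((k:ℚ)+2) * ((m:ℚ)+1+1) * A) := by
      apply mul_le_mul_of_nonneg_left _ (by positivity)
      linarith [IH]
    have h4 : ((m:ℚ)+1) * ((k:ℚ)*((k:ℚ)+2)) * B2 ≤ ((m:ℚ)+1) * ((k:ℚ)*((k:ℚ)+2)) * A := by
      apply mul_le_mul_of_nonneg_left hmono (by positivity)
    have hfin : B1 * (((k:ℚ)+1) * (((k:ℚ)+2*u+6)*((k:ℚ)+1) - ((k:ℚ)+u+m+5)*(k:ℚ))
            - (k:ℚ)*((m:ℚ)+1)) * ((k:ℚ)+m+2)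
        ≤ (((k:ℚ)+2) * ((m:ℚ)+1) * A) * ((k:ℚ)+m+2) := by
      linarith [e1, h3, h4]
    exact le_of_mul_le_mul_right hfin (by positivity)

private lemma F_aux (k u : ℕ) (hk : 1 ≤ k) :
    ∀ d m : ℕ, m + d = u →
    0 < ((k+u+3).choose (k+1) : ℚ) *
          (((k:ℚ)+2*u+6)*((k:ℚ)+1) - ((k:ℚ)+u+m+4)*((k:ℚ)+2)) +
        ((k+m+1).choose (k+1) : ℚ) *
          (((k:ℚ)+2*u+6)*((k:ℚ)+1) - ((k:ℚ)+u+m+4)*(k:ℚ)) := by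
  intro d
  induction d with
  | zero =>
    intro m hm
    obtain rfl : m = u := by omega
    have c1 := cstepc k (m+2)
    have c2 := cstepc k (m+1)
    rw [show k+(m+2)+1 = k+m+3 from by omega, show k+(m+2) = k+m+2 from by omega] at c1
    rw [show k+(m+1)+1 = k+m+2 from by omega, show k+(m+1) = k+m+1 from by omega] at c2
    push_cast at c1 c2
    set A : ℚ := ((k+m+3).choose (k+1) : ℚ) with hA
    set B : ℚ := ((k+m+1).choose (k+1) : ℚ) with hB
    have E2 : A * (((m:ℚ)+2)*((m:ℚ)+1)) = ((k:ℚ)+m+3)*((k:ℚ)+m+2) * B := by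
      linear_combination (((m:ℚ)+1)) * c1 + (((k:ℚ)+m+3)) * c2
    have hmul : (A * (((k:ℚ)+2*m+6)*((k:ℚ)+1) - ((k:ℚ)+m+m+4)*((k:ℚ)+2)) +
          B * (((k:ℚ)+2*m+6)*((k:ℚ)+1) - ((k:ℚ)+m+m+4)*(k:ℚ))) * (((m:ℚ)+2)*((m:ℚ)+1))
        = B * ((k:ℚ)*((k:ℚ)+1)*((k:ℚ)+2)) := by
      linear_combination (((k:ℚ)+2*m+6)*((k:ℚ)+1) - ((k:ℚ)+m+m+4)*((k:ℚ)+2)) * E2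
    have hB1 : (1:ℚ) ≤ B := by
      rw [hB]
      exact_mod_cast Nat.succ_le_of_lt (Nat.choose_pos (by omega : k+1 ≤ k+m+1))
    have hk1 : (1:ℚ) ≤ (k:ℚ) := by exact_mod_cast hk
    have h6 : (6:ℚ) ≤ (k:ℚ)*((k:ℚ)+1)*((k:ℚ)+2) := by
      nlinarith [hk1, mul_nonneg (by linarith : (0:ℚ) ≤ (k:ℚ)-1)
        (by positivity : (0:ℚ) ≤ (k:ℚ)^2+4*(k:ℚ)+6)]
    have hfac : (0:ℚ) < ((m:ℚ)+2)*((m:ℚ)+1) := by positivity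
    nlinarith [hmul, hB1, h6, hfac]
  | succ d ih =>
    intro m hm
    have IH := ih (m+1) (by omega)
    rw [show k+(m+1)+1 = k+m+2 from by omega] at IH
    push_cast at IH
    have hstar := star_aux k u d m (by omega)
    have hI := cstepc k (m+1)
    rw [show k+(m+1)+1 = k+m+2 from by omega, show k+(m+1) = k+m+1 from by omega] at hI
    push_cast at hI
    have hm1 : (0:ℚ) < (m:ℚ)+1 := by positivity
    set A : ℚ := ((k+u+3).choose (k+1) : ℚ) with hA
    set B1 : ℚ := ((k+m+1).choose (k+1) : ℚ) with hB1
    set B2 : ℚ := ((k+m+2).choose (k+1) : ℚ) with hB2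
    have e : ((m:ℚ)+1) * (A * (((k:ℚ)+2*u+6)*((k:ℚ)+1) - ((k:ℚ)+u+m+4)*((k:ℚ)+2)) +
            B1 * (((k:ℚ)+2*u+6)*((k:ℚ)+1) - ((k:ℚ)+u+m+4)*(k:ℚ)))
          - ((m:ℚ)+1) * (A * (((k:ℚ)+2*u+6)*((k:ℚ)+1) - ((k:ℚ)+u+((m:ℚ)+1)+4)*((k:ℚ)+2)) +
            B2 * (((k:ℚ)+2*u+6)*((k:ℚ)+1) - ((k:ℚ)+u+((m:ℚ)+1)+4)*(k:ℚ)))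
        = ((k:ℚ)+2)*((m:ℚ)+1) * A
          - B1 * (((k:ℚ)+1) * (((k:ℚ)+2*u+6)*((k:ℚ)+1) - ((k:ℚ)+u+m+5)*(k:ℚ))
              - (k:ℚ)*((m:ℚ)+1)) := by
      linear_combination (-(((k:ℚ)+2*u+6)*((k:ℚ)+1) - ((k:ℚ)+u+((m:ℚ)+1)+4)*(k:ℚ))) * hI
    nlinarith [e, hstar, IH, hm1]

theorem ctilde_pos (r k n : ℕ) (hr : 4 ≤ r) (hk1 : 1 ≤ k) (hk : k ≤ r - 3)
    (hn1 : r ≤ n) (hn : n ≤ 2 * r - 3 - k) :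
    0 < (r.choose (k + 1) : ℚ) *
          ((2 * (r : ℚ) - k) * ((k : ℚ) + 1) - ((n : ℚ) + 1) * ((k : ℚ) + 2)) / ((k : ℚ) + 2) +
        ((k + (n - r) + 1).choose (k + 1) : ℚ) *
          ((2 * (r : ℚ) - k) * ((k : ℚ) + 1) - ((n : ℚ) + 1) * k) / ((k : ℚ) + 2) := by
  obtain ⟨u, rfl⟩ : ∃ u, r = k + u + 3 := ⟨r - k - 3, by omega⟩
  obtain ⟨m, rfl⟩ : ∃ m, n = k + u + 3 + m := ⟨n - (k + u + 3), by omega⟩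
  have hmu : m ≤ u := by omega
  rw [show k + u + 3 + m - (k + u + 3) = m from by omega]
  have key := F_aux k u hk1 (u - m) m (by omega)
  rw [← add_div]
  apply div_pos ?_ (by positivity)
  calc (0:ℚ) < _ := key
    _ = _ := by push_cast; ring
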